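/- For the single-qubit depolarizing channel Γ_θ(ρ) = θρ + (1−θ)I/2 with θ ∈ (0,1), the SLD Fisher information of the output state Γ_θ(|ψ⟩⟨ψ|) for any pure input |ψ⟩ equals 1/(1−θ²), and this is the maximum of g_θ[Γ_θ(ρ)] over all single-qubit density matrices ρ. -/

import Mathlib

open Matrix
open scoped ComplexOrder
noncomputable section

/-- The single-qubit depolarizing channel `Γ_θ(ρ) = θρ + (1-θ)I/2` (for trace-one `ρ`). -/
def depol (t : ℝ) (ρ : Matrix (Fin 2) (Fin 2) ℂ) : Matrix (Fin 2) (Fin 2) ℂ :=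
  (t : ℂ) • ρ + (((1 - t) / 2 : ℝ) : ℂ) • 1

lemma depol_deriv_aux (θ : ℝ) (ρ ρ' : Matrix (Fin 2) (Fin 2) ℂ)
    (hd : ∀ i j, HasDerivAt (fun t => depol t ρ i j) (ρ' i j) θ) :
    ρ' = ρ - ((1:ℂ)/2) • 1 := by
  ext i j
  have hfun : (fun t : ℝ => depol t ρ i j)
      = fun t : ℝ => (t:ℂ) * ρ i j + (((1-t)/2 : ℝ):ℂ) * (1 : Matrix (Fin 2) (Fin 2) ℂ) i j := by
    funext t; simp [depol, Matrix.add_apply, Matrix.smul_apply, smul_eq_mul]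
  have hA : HasDerivAt (fun t : ℝ => (t:ℂ) * ρ i j) (ρ i j) θ := by
    simpa using ((hasDerivAt_id θ).ofReal_comp).mul_const (ρ i j)
  have hB : HasDerivAt (fun t : ℝ => (((1-t)/2 : ℝ):ℂ) * (1 : Matrix (Fin 2) (Fin 2) ℂ) i j)
      (((-(1/2) : ℝ):ℂ) * (1 : Matrix (Fin 2) (Fin 2) ℂ) i j) θ := by
    have h0 : HasDerivAt (fun t : ℝ => ((1-t)/2 : ℝ)) (-(1/2)) θ := by
      have := ((hasDerivAt_id θ).const_sub 1).div_const 2; norm_num at this ⊢; exact this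
    exact (h0.ofReal_comp).mul_const _
  have h1 : HasDerivAt (fun t : ℝ => depol t ρ i j)
      (ρ i j + ((-(1/2) : ℝ):ℂ) * (1 : Matrix (Fin 2) (Fin 2) ℂ) i j) θ := by
    rw [hfun]; exact hA.add hB
  have h2 := (hd i j).unique h1
  rw [h2]
  simp [Matrix.sub_apply, Matrix.smul_apply, smul_eq_mul]
  ring

lemma depol_trace_key (θ k : ℝ) (hne : ((1 : ℂ) - 4*(θ:ℂ)^2*(k:ℂ)) ≠ 0)
    (ρ L : Matrix (Fin 2) (Fin 2) ℂ) (htr : ρ.trace = 1)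
    (hD2 : (ρ - ((1:ℂ)/2) • 1) * (ρ - ((1:ℂ)/2) • 1) = (k : ℂ) • 1)
    (hEq : ρ - ((1:ℂ)/2) • 1 = (1/2 : ℂ) • (depol θ ρ * L + L * depol θ ρ)) :
    (L * (ρ - ((1:ℂ)/2) • 1)).trace = ((4*k/(1-4*θ^2*k) : ℝ) : ℂ) := by
  set D : Matrix (Fin 2) (Fin 2) ℂ := ρ - ((1:ℂ)/2) • 1 with hD
  have hM : depol θ ρ = (θ:ℂ) • D + ((1:ℂ)/2) • 1 := by
    simp only [hD, depol]
    push_cast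
    module
  have htrD : D.trace = 0 := by
    simp [hD, Matrix.trace_sub, Matrix.trace_smul, Matrix.trace_one, htr]
  have hLM : L * depol θ ρ = (θ:ℂ) • (L * D) + ((1:ℂ)/2) • L := by
    rw [hM]; simp [Matrix.mul_add, mul_smul_comm]
  have e1 : (θ:ℂ) * (L*D).trace + (1/2:ℂ) * L.trace = 0 := by
    have h := congrArg Matrix.trace hEq
    rw [htrD, Matrix.trace_smul, Matrix.trace_add, Matrix.trace_mul_comm (depol θ ρ) L, hLM] at h
    simp only [Matrix.trace_add, Matrix.trace_smul, smul_eq_mul] at h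
    linear_combination -h
  have hLDM : (L * D) * depol θ ρ = ((θ:ℂ) * (k:ℂ)) • L + ((1:ℂ)/2) • (L * D) := by
    rw [hM, Matrix.mul_add, mul_smul_comm, Matrix.mul_assoc, hD2]
    simp only [mul_smul_comm, Matrix.mul_one, smul_smul]
  have hLMD : (L * depol θ ρ) * D = ((θ:ℂ) * (k:ℂ)) • L + ((1:ℂ)/2) • (L * D) := by
    rw [hLM, Matrix.add_mul, Matrix.smul_mul, Matrix.smul_mul, Matrix.mul_assoc, hD2]
    simp only [mul_smul_comm, Matrix.mul_one, smul_smul]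
  have e2 : (θ:ℂ) * (k:ℂ) * L.trace + (1/2:ℂ) * (L*D).trace = 2 * (k:ℂ) := by
    have h := congrArg (fun X : Matrix (Fin 2) (Fin 2) ℂ => (X * D).trace) hEq
    rw [hD2, Matrix.smul_mul, Matrix.add_mul, Matrix.trace_smul, Matrix.trace_smul,
      Matrix.trace_add, Matrix.mul_assoc (depol θ ρ) L D,
      Matrix.trace_mul_comm (depol θ ρ) (L*D), hLDM, hLMD] at h
    simp only [Matrix.trace_add, Matrix.trace_smul, Matrix.trace_one, Fintype.card_fin,
      Nat.cast_ofNat, smul_eq_mul] at h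
    linear_combination -h
  have hcast : ((4*k/(1-4*θ^2*k) : ℝ) : ℂ) = 4*(k:ℂ)/(1 - 4*(θ:ℂ)^2*(k:ℂ)) := by
    push_cast; ring
  rw [hcast, eq_div_iff hne]
  linear_combination 2*e2 - 4*(θ:ℂ)*(k:ℂ)*e1

lemma pure_D2 (ψ : Fin 2 → ℂ) (hψ : ∑ i, ‖ψ i‖ ^ 2 = 1) :
    (vecMulVec ψ (star ψ) - ((1:ℂ)/2) • 1) * (vecMulVec ψ (star ψ) - ((1:ℂ)/2) • 1)
      = (((1:ℝ)/4 : ℝ) : ℂ) • 1 := by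
  have hc : ψ 0 * (starRingEnd ℂ) (ψ 0) + ψ 1 * (starRingEnd ℂ) (ψ 1) = 1 := by
    rw [Fin.sum_univ_two, Complex.sq_norm, Complex.sq_norm] at hψ
    rw [Complex.mul_conj, Complex.mul_conj]
    exact_mod_cast hψ
  ext i j
  fin_cases i <;> fin_cases j <;>
    simp [Matrix.mul_apply, Fin.sum_univ_two, Matrix.vecMulVec_apply, Matrix.sub_apply,
      Matrix.smul_apply, Matrix.one_apply, Pi.star_apply, Complex.star_def, smul_eq_mul]
  · linear_combination (ψ 0 * (starRingEnd ℂ) (ψ 0)) * hc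
  · linear_combination (ψ 0 * (starRingEnd ℂ) (ψ 1)) * hc
  · linear_combination (ψ 1 * (starRingEnd ℂ) (ψ 0)) * hc
  · linear_combination (ψ 1 * (starRingEnd ℂ) (ψ 1)) * hc

lemma pure_tr (ψ : Fin 2 → ℂ) (hψ : ∑ i, ‖ψ i‖ ^ 2 = 1) :
    (vecMulVec ψ (star ψ)).trace = 1 := by
  rw [Fin.sum_univ_two, Complex.sq_norm, Complex.sq_norm] at hψ
  rw [Matrix.trace_fin_two]
  simp only [Matrix.vecMulVec_apply, Pi.star_apply, Complex.star_def, Complex.mul_conj]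
  exact_mod_cast hψ

lemma mat_D2 (a : ℝ) (b : ℂ) :
    (!![(a:ℂ), b; (starRingEnd ℂ) b, 1-(a:ℂ)] - ((1:ℂ)/2) • 1)
      * (!![(a:ℂ), b; (starRingEnd ℂ) b, 1-(a:ℂ)] - ((1:ℂ)/2) • 1)
      = (((a - 1/2)^2 + Complex.normSq b : ℝ) : ℂ) • 1 := by
  ext i j
  fin_cases i <;> fin_cases j <;>
    simp [Matrix.mul_apply, Fin.sum_univ_two, Matrix.sub_apply, Matrix.smul_apply,
      Matrix.one_apply, smul_eq_mul] <;>
    push_cast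
  · linear_combination (Complex.mul_conj b)
  · ring
  · ring
  · linear_combination (Complex.mul_conj b)

lemma psd_facts (ρ : Matrix (Fin 2) (Fin 2) ℂ) (hPSD : ρ.PosSemidef) (htr : ρ.trace = 1) :
    ∃ k : ℝ, 0 ≤ k ∧ k ≤ 1/4 ∧
      (ρ - ((1:ℂ)/2) • 1) * (ρ - ((1:ℂ)/2) • 1) = (k : ℂ) • 1 := by
  set α : ℝ := (ρ 0 0).re with hα
  set b : ℂ := ρ 0 1 with hb
  set n : ℝ := Complex.normSq b with hn
  have hH := hPSD.1
  have h00 : ρ 0 0 = (α : ℂ) := by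
    have h := hH.apply 0 0
    have him : (ρ 0 0).im = 0 := by
      have := congrArg Complex.im h
      simp [Complex.star_def] at this
      linarith
    refine Complex.ext ?_ ?_ <;> simp [him, hα]
  have h10 : ρ 1 0 = (starRingEnd ℂ) b := by
    rw [← hH.apply 1 0]; rfl
  have h11 : ρ 1 1 = 1 - (α : ℂ) := by
    have := htr
    rw [Matrix.trace_fin_two, h00] at this
    linear_combination this
  have hQ : ∀ t : ℝ, 0 ≤ (1 - α)*t^2 + 2*n*t + α*n := by
    intro t
    have h := hPSD.dotProduct_mulVec_nonneg ![b, (t:ℂ)]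
    have hval : star ![b, (t:ℂ)] ⬝ᵥ ρ.mulVec ![b, (t:ℂ)]
        = (((1-α)*t^2 + 2*n*t + α*n : ℝ) : ℂ) := by
      simp only [dotProduct, Matrix.mulVec, Fin.sum_univ_two, Pi.star_apply,
        Matrix.cons_val_zero, Matrix.cons_val_one, Matrix.head_cons, Complex.star_def,
        h00, h10, h11, Complex.conj_ofReal]
      push_cast
      rw [hn]
      linear_combination ((α:ℂ) + 2*(t:ℂ)) * (Complex.mul_conj b)
    rw [hval] at h
    exact Complex.zero_le_real.mp h
  have hα0 : 0 ≤ α := by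
    have h := hPSD.dotProduct_mulVec_nonneg ![1, 0]
    have hval : star ![(1:ℂ), 0] ⬝ᵥ ρ.mulVec ![1, 0] = ((α : ℝ) : ℂ) := by
      simp [dotProduct, Matrix.mulVec, Fin.sum_univ_two, h00]
    rw [hval] at h
    exact Complex.zero_le_real.mp h
  have hα1 : α ≤ 1 := by
    have h := hPSD.dotProduct_mulVec_nonneg ![0, 1]
    have hval : star ![(0:ℂ), 1] ⬝ᵥ ρ.mulVec ![0, 1] = (((1 - α) : ℝ) : ℂ) := by
      simp [dotProduct, Matrix.mulVec, Fin.sum_univ_two, h11]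
    rw [hval] at h
    have := Complex.zero_le_real.mp h
    linarith
  have hn0 : 0 ≤ n := Complex.normSq_nonneg b
  refine ⟨(α - 1/2)^2 + n, by positivity, ?_, ?_⟩
  · rcases eq_or_lt_of_le hn0 with h0 | hpos
    · nlinarith
    · have hB := hQ (-n)
      have hαpos : 0 < α := by nlinarith
      have hA := hQ (-α)
      nlinarith
  · have hρ : ρ = !![(α:ℂ), b; (starRingEnd ℂ) b, 1-(α:ℂ)] := by
      ext i j
      fin_cases i <;> fin_cases j <;>
        simp [h00, h10, h11, hb]
    rw [hn, hρ]
    exact mat_D2 α b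

/-- For the depolarizing channel with `θ ∈ (0,1)`, the SLD Fisher information of the output family
for any pure input equals `1/(1-θ²)`, and this is the maximum over all input density matrices. -/
theorem depol_fisher_pure_optimal (θ : ℝ) (hθ : θ ∈ Set.Ioo (0 : ℝ) 1) :
    (∀ ψ : Fin 2 → ℂ, (∑ i, ‖ψ i‖ ^ 2 = 1) →
      ∀ ρ' : Matrix (Fin 2) (Fin 2) ℂ,
        (∀ i j, HasDerivAt (fun t => depol t (vecMulVec ψ (star ψ)) i j) (ρ' i j) θ) →
        ∀ L : Matrix (Fin 2) (Fin 2) ℂ, L.IsHermitian →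
          ρ' = (1 / 2 : ℂ) • (depol θ (vecMulVec ψ (star ψ)) * L + L * depol θ (vecMulVec ψ (star ψ))) →
          ((L * ρ').trace).re = 1 / (1 - θ ^ 2)) ∧
    (∀ ρ : Matrix (Fin 2) (Fin 2) ℂ, ρ.PosSemidef → ρ.trace = 1 →
      ∀ ρ' : Matrix (Fin 2) (Fin 2) ℂ,
        (∀ i j, HasDerivAt (fun t => depol t ρ i j) (ρ' i j) θ) →
        ∀ L : Matrix (Fin 2) (Fin 2) ℂ, L.IsHermitian →
          ρ' = (1 / 2 : ℂ) • (depol θ ρ * L + L * depol θ ρ) →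
          ((L * ρ').trace).re ≤ 1 / (1 - θ ^ 2)) := by
  obtain ⟨hθ0, hθ1⟩ := hθ
  have hθ2 : θ^2 < 1 := by nlinarith
  constructor
  · intro ψ hψ ρ' hd L _ hEq
    have hρ' := depol_deriv_aux θ _ ρ' hd
    rw [hρ'] at hEq ⊢
    have hne : ((1 : ℂ) - 4*(θ:ℂ)^2*(((1:ℝ)/4 : ℝ):ℂ)) ≠ 0 := by
      have h1 : ((1 - θ^2 : ℝ) : ℂ) ≠ 0 := by
        exact_mod_cast (by nlinarith : (1:ℝ) - θ^2 ≠ 0)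
      have h2 : ((1 : ℂ) - 4*(θ:ℂ)^2*(((1:ℝ)/4 : ℝ):ℂ)) = ((1 - θ^2 : ℝ) : ℂ) := by
        push_cast; ring
      rw [h2]; exact h1
    have hkey := depol_trace_key θ ((1:ℝ)/4) hne _ L (pure_tr ψ hψ) (pure_D2 ψ hψ) hEq
    rw [hkey, Complex.ofReal_re]
    rw [show (4*((1:ℝ)/4)/(1-4*θ^2*((1:ℝ)/4)) : ℝ) = 1/(1-θ^2) by
      rw [show (1-4*θ^2*((1:ℝ)/4) : ℝ) = 1 - θ^2 by ring]; ring]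
  · intro ρ hPSD htr ρ' hd L _ hEq
    have hρ' := depol_deriv_aux θ ρ ρ' hd
    rw [hρ'] at hEq ⊢
    obtain ⟨k, hk0, hk14, hD2⟩ := psd_facts ρ hPSD htr
    have hden : (0:ℝ) < 1 - 4*θ^2*k := by nlinarith
    have hne : ((1 : ℂ) - 4*(θ:ℂ)^2*(k:ℂ)) ≠ 0 := by
      have h1 : ((1 - 4*θ^2*k : ℝ) : ℂ) ≠ 0 := by
        exact_mod_cast (ne_of_gt hden)
      have h2 : ((1 : ℂ) - 4*(θ:ℂ)^2*(k:ℂ)) = ((1 - 4*θ^2*k : ℝ) : ℂ) := by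
        push_cast; ring
      rw [h2]; exact h1
    have hkey := depol_trace_key θ k hne ρ L htr hD2 hEq
    rw [hkey, Complex.ofReal_re]
    rw [div_le_div_iff₀ hden (by nlinarith : (0:ℝ) < 1 - θ^2)]
    nlinarith
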